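/- With X = {0,1}, D and g as above, and V ⊆ X* any dictionary such that V^ω is a Σ⁰₂ subset of X^ω, the ω-power (g(V))^ω = g(V^ω) is a Borel subset of (X∪{d})^ω (it is a countable union of Π⁰₂ sets, hence Σ⁰₃). -/

import Mathlib

open Set

/-- Finite levels of the Borel hierarchy: index `n` corresponds to level `n+1`.
Index 0 gives (open, closed); index `n+1` gives (countable unions of level-`n` Π sets,
countable intersections of level-`n` Σ sets). -/
def sigmaPiAux (α : Type*) [TopologicalSpace α] : ℕ → (Set α → Prop) × (Set α → Prop)
  | 0 => (fun s => IsOpen s, fun s => IsClosed s)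
  | n + 1 =>
      (fun s => ∃ f : ℕ → Set α, (∀ i, (sigmaPiAux α n).2 (f i)) ∧ s = ⋃ i, f i,
       fun s => ∃ f : ℕ → Set α, (∀ i, (sigmaPiAux α n).1 (f i)) ∧ s = ⋂ i, f i)

/-- The class Σ⁰ₖ of the Borel hierarchy (for `k ≥ 1`). -/
def SigmaClass {α : Type*} [TopologicalSpace α] (k : ℕ) (s : Set α) : Prop :=
  (sigmaPiAux α (k - 1)).1 s

/-- The class Π⁰ₖ of the Borel hierarchy (for `k ≥ 1`). -/
def PiClass {α : Type*} [TopologicalSpace α] (k : ℕ) (s : Set α) : Prop :=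
  (sigmaPiAux α (k - 1)).2 s

/-- A finite word `l` is a prefix of the infinite word `x`. -/
def PrefixOf {α : Type*} (l : List α) (x : ℕ → α) : Prop :=
  ∀ (i : ℕ) (h : i < l.length), l.get ⟨i, h⟩ = x i

/-- The ω-power of a dictionary `V`: infinite concatenations of nonempty words of `V`. -/
def omegaPow {α : Type*} (V : Set (List α)) : Set (ℕ → α) :=
  {x | ∃ u : ℕ → List α, (∀ i, u i ∈ V ∧ u i ≠ []) ∧
        ∀ n, PrefixOf (((List.range n).map u).flatten) x}

/-- Words over `X ∪ {b}` (with `b = none`) containing infinitely many letters of `X`. -/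
def Zinf (X : Type*) : Set (ℕ → Option X) := {x | ∀ N, ∃ m, N ≤ m ∧ (x m).isSome}

/-- The map deleting every occurrence of the letter `b = none`. -/
noncomputable def phi {X : Type*} [Inhabited X] (x : ℕ → Option X) : ℕ → X :=
  fun n => (x (Nat.nth (fun m => (x m).isSome = true) n)).getD default

/-- `A^b = {x ∈ (X ∪ {b})^ω : x(/b) ∈ A}`. -/
def bPower {X : Type*} [Inhabited X] (A : Set (ℕ → X)) : Set (ℕ → Option X) :=
  {x | x ∈ Zinf X ∧ phi x ∈ A}

/-- Wadge reducibility. -/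
def WadgeLE {α β : Type*} [TopologicalSpace α] [TopologicalSpace β]
    (L : Set α) (L' : Set β) : Prop :=
  ∃ f : α → β, Continuous f ∧ L = f ⁻¹' L'

/-- Substitution extended to finite words. -/
def subWord {X Y : Type*} (f : X → Set (List Y)) : List X → Set (List Y)
  | [] => {[]}
  | a :: w => {l | ∃ u v, u ∈ f a ∧ v ∈ subWord f w ∧ l = u ++ v}

/-- Substitution extended to dictionaries. -/
def subLang {X Y : Type*} (f : X → Set (List Y)) (V : Set (List X)) : Set (List Y) :=
  ⋃ w ∈ V, subWord f w

/-- Substitution extended to an infinite word. -/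
def subOmega {X Y : Type*} (f : X → Set (List Y)) (x : ℕ → X) : Set (ℕ → Y) :=
  {y | ∃ u : ℕ → List Y, (∀ i, u i ∈ f (x i)) ∧
        ∀ n, PrefixOf (((List.range n).map u).flatten) y}

/-- Substitution extended to ω-languages. -/
def subOmegaImage {X Y : Type*} (f : X → Set (List Y)) (L : Set (ℕ → X)) : Set (ℕ → Y) :=
  ⋃ x ∈ L, subOmega f x


/-- `D = {u·d·v : u,v ∈ {0,1}*, |v| = 2|u| or |v| = 2|u|+1}`, with `d = none`. -/
def Ddict : Set (List (Option Bool)) :=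
  {l | ∃ u v : List Bool, (v.length = 2 * u.length ∨ v.length = 2 * u.length + 1) ∧
        l = u.map some ++ [none] ++ v.map some}

/-- The substitution `g(a) = a·D`. -/
def gsub : Bool → Set (List (Option Bool)) := fun a => {l | ∃ w ∈ Ddict, l = some a :: w}

/-- `({0,1}*·d)^ω`: the words over `{0,1,d}` with infinitely many occurrences of `d`. -/
def Dinf : Set (ℕ → Option Bool) := {x | ∀ N, ∃ m, N ≤ m ∧ x m = none}


section Lemmas
variable {α γ : Type*}

theorem prefixOf_iff {l : List α} {x : ℕ → α} :
    PrefixOf l x ↔ ∀ i (h : i < l.length), l[i] = x i := Iff.rfl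

theorem PrefixOf.mono {p q : List α} {x : ℕ → α} (h : PrefixOf (p ++ q) x) : PrefixOf p x := by
  intro i hi
  have h2 : i < (p ++ q).length := by simp; omega
  have := h i h2
  rw [List.get_eq_getElem, List.getElem_append_left hi] at this
  exact this

theorem flatten_range_succ (u : ℕ → List α) (n : ℕ) :
    ((List.range (n+1)).map u).flatten = ((List.range n).map u).flatten ++ u n := by
  rw [List.range_succ]; simp

theorem flatten_range_add (u : ℕ → List α) (m k : ℕ) :
    ((List.range (m+k)).map u).flatten
      = ((List.range m).map u).flatten ++ ((List.range k).map (fun i => u (m+i))).flatten := by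
  induction k with
  | zero => simp
  | succ k ih => rw [show m + (k+1) = (m+k)+1 by omega, flatten_range_succ, ih,
      flatten_range_succ, List.append_assoc]

theorem prefixOf_flatten_range_mono {u : ℕ → List α} {x : ℕ → α} {m n : ℕ} (hmn : m ≤ n)
    (h : PrefixOf (((List.range n).map u).flatten) x) :
    PrefixOf (((List.range m).map u).flatten) x := by
  rw [show n = m + (n - m) by omega, flatten_range_add] at h
  exact h.mono

/-- reading entries of a flattened prefix -/
theorem flatten_read {bs : List (List γ)} {y : ℕ → γ} (h : PrefixOf bs.flatten y) :
    ∀ i (hi : i < bs.length) k (hk : k < bs[i].length),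
      bs[i][k] = y (((bs.take i).flatten).length + k) := by
  induction bs generalizing y with
  | nil => intro i hi; simp at hi
  | cons b t ih =>
    intro i hi k hk
    match i with
    | 0 =>
      have hkb : k < b.length := by simpa using hk
      have h2 : k < (b :: t).flatten.length := by
        simp only [List.flatten_cons, List.length_append]; omega
      have := h k h2
      rw [List.get_eq_getElem] at this
      simp only [List.flatten_cons] at this
      rw [List.getElem_append_left hkb] at this
      simpa using this
    | i + 1 =>
      have hpre : PrefixOf t.flatten (fun n => y (b.length + n)) := by
        intro j hj
        have h2 : b.length + j < (b :: t).flatten.length := by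
          simp only [List.flatten_cons, List.length_append]; omega
        have := h (b.length + j) h2
        rw [List.get_eq_getElem] at this
        simp only [List.flatten_cons] at this
        rw [List.getElem_append_right (by omega)] at this
        simp only [Nat.add_sub_cancel_left] at this
        rw [List.get_eq_getElem]
        exact this
      have hi' : i < t.length := by simpa using hi
      have hk' : k < t[i].length := by simpa using hk
      have := ih hpre i hi' k hk'
      simp only [List.getElem_cons_succ, List.take_succ_cons, List.flatten_cons,
        List.length_append] at *
      rw [this]; ring_nf

theorem take_flatten_length_succ {bs : List (List γ)} {i : ℕ} (hi : i < bs.length) :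
    ((bs.take (i+1)).flatten).length = ((bs.take i).flatten).length + bs[i].length := by
  rw [List.take_succ, List.getElem?_eq_getElem hi, List.flatten_append]
  simp

end Lemmas
section Topo
variable {β : Type*} [TopologicalSpace β] [DiscreteTopology β]

theorem isOpen_agree (x0 : ℕ → β) (n : ℕ) : IsOpen {x : ℕ → β | ∀ i < n, x i = x0 i} := by
  have : {x : ℕ → β | ∀ i < n, x i = x0 i}
      = ⋂ (i : Fin n), (fun x : ℕ → β => x i.1) ⁻¹' {x0 i.1} := by
    ext x; simp [Fin.forall_iff]
  rw [this]
  exact isOpen_iInter_of_finite fun i =>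
    (continuous_apply i.1).isOpen_preimage _ (isOpen_discrete _)

theorem isOpen_prefixOf (l : List β) : IsOpen {x : ℕ → β | PrefixOf l x} := by
  have : {x : ℕ → β | PrefixOf l x}
      = ⋂ (i : Fin l.length), (fun x : ℕ → β => x i.1) ⁻¹' {l.get i} := by
    ext x
    simp only [mem_setOf_eq, mem_iInter, mem_preimage, mem_singleton_iff, PrefixOf]
    constructor
    · intro h i; exact (h i.1 i.2).symm
    · intro h i hi; exact (h ⟨i, hi⟩).symm
  rw [this]
  exact isOpen_iInter_of_finite fun i =>
    (continuous_apply i.1).isOpen_preimage _ (isOpen_discrete _)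

theorem isClosed_of_agree_invariant {S : Set (ℕ → β)} {n : ℕ}
    (h : ∀ c c' : ℕ → β, (∀ i < n, c i = c' i) → c ∈ S → c' ∈ S) : IsClosed S := by
  rw [← isOpen_compl_iff]
  have : Sᶜ = ⋃ (c' : ℕ → β) (_ : c' ∈ Sᶜ), {c : ℕ → β | ∀ i < n, c i = c' i} := by
    ext c
    constructor
    · intro hc
      exact mem_iUnion₂.mpr ⟨c, hc, fun i _ => rfl⟩
    · intro hc
      obtain ⟨c', hc', hagree⟩ := mem_iUnion₂.mp hc
      intro hcS
      exact hc' (h c c' hagree hcS)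
  rw [this]
  exact isOpen_iUnion fun c' => isOpen_iUnion fun _ => isOpen_agree c' n

theorem mem_closed_of_agree {F : Set (ℕ → β)} (hF : IsClosed F) {x : ℕ → β}
    (h : ∀ n, ∃ z ∈ F, ∀ i < n, z i = x i) : x ∈ F := by
  rw [← hF.closure_eq]
  rw [mem_closure_iff]
  intro U hU hxU
  obtain ⟨I, u, hIu, hsub⟩ := isOpen_pi_iff.mp hU x hxU
  obtain ⟨z, hzF, hz⟩ := h ((I.sup id) + 1)
  refine ⟨z, hsub fun i hi => ?_, hzF⟩
  rw [hz i (by simpa using Nat.lt_succ_of_le (Finset.le_sup (f := id) hi))]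
  exact (hIu i hi).2
end Topo
section Blocks

/-- canonical block shape -/
def blockOf (a : Bool) (u v : List Bool) : List (Option Bool) :=
  some a :: (u.map some ++ [none] ++ v.map some)

theorem mem_gsub_iff {a : Bool} {b : List (Option Bool)} :
    b ∈ gsub a ↔ ∃ u v : List Bool,
      (v.length = 2 * u.length ∨ v.length = 2 * u.length + 1) ∧ b = blockOf a u v := by
  simp only [gsub, Ddict, mem_setOf_eq, blockOf]
  constructor
  · rintro ⟨w, ⟨u, v, hlen, rfl⟩, rfl⟩
    exact ⟨u, v, hlen, rfl⟩
  · rintro ⟨u, v, hlen, rfl⟩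
    exact ⟨_, ⟨u, v, hlen, rfl⟩, rfl⟩

theorem blockOf_length (a : Bool) (u v : List Bool) :
    (blockOf a u v).length = u.length + v.length + 2 := by
  simp [blockOf]; omega

theorem blockOf_zero (a : Bool) (u v : List Bool) {h : 0 < (blockOf a u v).length} :
    (blockOf a u v)[0] = some a := rfl

theorem blockOf_u (a : Bool) (u v : List Bool) {k : ℕ} (hk : k < u.length)
    {h : k + 1 < (blockOf a u v).length} :
    (blockOf a u v)[k+1] = some u[k] := by
  simp only [blockOf, List.getElem_cons_succ]
  rw [List.getElem_append_left (by simp; omega), List.getElem_append_left (by simpa),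
    List.getElem_map]

theorem blockOf_none (a : Bool) (u v : List Bool)
    {h : u.length + 1 < (blockOf a u v).length} :
    (blockOf a u v)[u.length + 1] = none := by
  simp only [blockOf, List.getElem_cons_succ]
  rw [List.getElem_append_left (by simp), List.getElem_append_right (by simp)]
  simp

theorem gsub_ne_nil {a : Bool} {b : List (Option Bool)} (h : b ∈ gsub a) : b ≠ [] := by
  obtain ⟨u, v, _, rfl⟩ := mem_gsub_iff.mp h
  simp [blockOf]

/-- The choice bit of a block, recoverable from its length. -/
def bitOf (b : List (Option Bool)) : Bool := decide (b.length % 3 = 0)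

/-- A partial parse of `y` into blocks `bs` with letters `as`. -/
def ValidParse (y : ℕ → Option Bool) (bs : List (List (Option Bool))) (as : List Bool) : Prop :=
  bs.length = as.length ∧
  (∀ i (hi : i < bs.length) (hi' : i < as.length), bs[i] ∈ gsub as[i]) ∧
  PrefixOf bs.flatten y

/-- The tree of finite prefixes of a set of infinite words. -/
def pTree (F : Set (ℕ → Bool)) : Set (List Bool) :=
  {w | ∃ z ∈ F, ∀ i (h : i < w.length), w[i] = z i}

/-- Open approximations. -/
def Uapprox (F : Set (ℕ → Bool)) (n : ℕ) : Set (ℕ → Option Bool) :=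
  {y | ∃ bs as, as.length = n ∧ ValidParse y bs as ∧ as ∈ pTree F}

theorem validParse_take {y bs as} (h : ValidParse y bs as) (n : ℕ) :
    ValidParse y (bs.take n) (as.take n) := by
  obtain ⟨hlen, hmem, hpre⟩ := h
  refine ⟨by simp [hlen], ?_, ?_⟩
  · intro i hi hi'
    rw [List.getElem_take, List.getElem_take]
    exact hmem i (by simp at hi; omega) (by simp at hi'; omega)
  · have : bs.flatten = (bs.take n).flatten ++ (bs.drop n).flatten := by
      rw [← List.flatten_append, List.take_append_drop]
    rw [this] at hpre
    exact hpre.mono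

theorem pTree_take {F : Set (ℕ → Bool)} {as : List Bool} (h : as ∈ pTree F) (n : ℕ) :
    as.take n ∈ pTree F := by
  obtain ⟨z, hz, hag⟩ := h
  refine ⟨z, hz, fun i hi => ?_⟩
  rw [List.getElem_take]
  exact hag i (by simp at hi; omega)

theorem isOpen_Uapprox [TopologicalSpace (Option Bool)] [DiscreteTopology (Option Bool)]
    (F : Set (ℕ → Bool)) (n : ℕ) : IsOpen (Uapprox F n) := by
  have : Uapprox F n = ⋃ (p : List (List (Option Bool)) × List Bool)
      (_ : p.2.length = n ∧ (p.1.length = p.2.length ∧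
        ∀ i (hi : i < p.1.length) (hi' : i < p.2.length), p.1[i] ∈ gsub p.2[i]) ∧ p.2 ∈ pTree F),
      {y | PrefixOf p.1.flatten y} := by
    ext y
    simp only [Uapprox, mem_setOf_eq, mem_iUnion]
    constructor
    · rintro ⟨bs, as, h1, ⟨h2, h3, h4⟩, h5⟩
      exact ⟨(bs, as), ⟨h1, ⟨h2, h3⟩, h5⟩, h4⟩
    · rintro ⟨⟨bs, as⟩, ⟨h1, ⟨h2, h3⟩, h5⟩, h4⟩
      exact ⟨bs, as, h1, ⟨h2, h3, h4⟩, h5⟩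
  rw [this]
  exact isOpen_iUnion fun p => isOpen_iUnion fun _ => isOpen_prefixOf _

end Blocks
section Det

theorem off_eq {bs bs' : List (List (Option Bool))} :
    ∀ i, i ≤ bs.length → i ≤ bs'.length →
    (∀ j (hj : j < i) (hj' : j < bs.length) (hj'' : j < bs'.length),
      bs[j].length = bs'[j].length) →
    ((bs.take i).flatten).length = ((bs'.take i).flatten).length := by
  intro i
  induction i with
  | zero => simp
  | succ i ih =>
    intro hi hi' hj
    rw [take_flatten_length_succ (by omega), take_flatten_length_succ (by omega),
      ih (by omega) (by omega) (fun j h a b => hj j (by omega) a b),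
      hj i (by omega) (by omega) (by omega)]

theorem parse_det {y : ℕ → Option Bool} {bs bs' : List (List (Option Bool))}
    {as as' : List Bool}
    (h : ValidParse y bs as) (h' : ValidParse y bs' as') (hlen : bs.length = bs'.length)
    (hbits : ∀ i (hi : i < bs.length) (hi' : i < bs'.length), bitOf bs[i] = bitOf bs'[i]) :
    bs = bs' ∧ as = as' := by
  obtain ⟨hL, hmem, hpre⟩ := h
  obtain ⟨hL', hmem', hpre'⟩ := h'
  have lens : ∀ i (hi : i < bs.length) (hi' : i < bs'.length),
      bs[i].length = bs'[i].length := by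
    intro i
    induction i using Nat.strong_induction_on with
    | _ i IH =>
      intro hi hi'
      have hoff : ((bs'.take i).flatten).length = ((bs.take i).flatten).length :=
        (off_eq i (by omega) (by omega) (fun j hj a b => IH j hj a b)).symm
      obtain ⟨u, v, hv, hbk⟩ := mem_gsub_iff.mp (hmem i hi (by omega))
      obtain ⟨u', v', hv', hbk'⟩ := mem_gsub_iff.mp (hmem' i hi' (by omega))
      have hlen1 : bs[i].length = u.length + v.length + 2 := by rw [hbk, blockOf_length]
      have hlen1' : bs'[i].length = u'.length + v'.length + 2 := by rw [hbk', blockOf_length]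
      have read : ∀ k (hk : k < bs[i].length),
          bs[i][k] = y (((bs.take i).flatten).length + k) :=
        fun k hk => flatten_read hpre i hi k hk
      have read' : ∀ k (hk : k < bs'[i].length),
          bs'[i][k] = y (((bs.take i).flatten).length + k) := by
        intro k hk
        have := flatten_read hpre' i hi' k hk
        rwa [hoff] at this
      have yu : ∀ k (hk : k < u.length),
          y (((bs.take i).flatten).length + (k + 1)) = some u[k] := by
        intro k hk
        rw [← read (k+1) (by omega), List.getElem_of_eq hbk, blockOf_u _ u v hk]
      have yu' : ∀ k (hk : k < u'.length),
          y (((bs.take i).flatten).length + (k + 1)) = some u'[k] := by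
        intro k hk
        rw [← read' (k+1) (by omega), List.getElem_of_eq hbk', blockOf_u _ u' v' hk]
      have ynone : y (((bs.take i).flatten).length + (u.length + 1)) = none := by
        rw [← read (u.length+1) (by omega), List.getElem_of_eq hbk, blockOf_none]
      have ynone' : y (((bs.take i).flatten).length + (u'.length + 1)) = none := by
        rw [← read' (u'.length+1) (by omega), List.getElem_of_eq hbk', blockOf_none]
      have hu : u.length = u'.length := by
        rcases Nat.lt_trichotomy u.length u'.length with hlt | heq | hgt
        · have h2 := yu' u.length hlt
          rw [ynone] at h2
          simp at h2
        · exact heq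
        · have h2 := yu u'.length hgt
          rw [ynone'] at h2
          simp at h2
      have hbiff : bs[i].length % 3 = 0 ↔ bs'[i].length % 3 = 0 := by
        have hb := hbits i hi hi'
        simpa [bitOf, decide_eq_decide] using hb
      rcases hv with hv | hv <;> rcases hv' with hv' | hv'
      · omega
      · have h0 : bs'[i].length % 3 = 0 := by omega
        have := hbiff.mpr h0
        omega
      · have h0 : bs[i].length % 3 = 0 := by omega
        have := hbiff.mp h0
        omega
      · omega
  have hbs : bs = bs' := by
    apply List.ext_get hlen
    intro n h1 h2
    simp only [List.get_eq_getElem]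
    apply List.ext_get (lens n h1 h2)
    intro k k1 k2
    simp only [List.get_eq_getElem]
    rw [flatten_read hpre n h1 k k1, flatten_read hpre' n h2 k k2,
      off_eq n (by omega) (by omega) (fun j hj a b => lens j a b)]
  refine ⟨hbs, ?_⟩
  apply List.ext_get (by omega)
  intro n h1 h2
  simp only [List.get_eq_getElem]
  obtain ⟨u, v, _, hbk⟩ := mem_gsub_iff.mp (hmem n (by omega) h1)
  obtain ⟨u', v', _, hbk'⟩ := mem_gsub_iff.mp (hmem' n (by omega) h2)
  have hn : n < bs.length := by omega
  have hn' : n < bs'.length := by omega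
  have t1 : (bs[n]'hn)[0]'(by rw [hbk]; simp [blockOf]) = some (as[n]'h1) := by
    rw [List.getElem_of_eq hbk]
    exact blockOf_zero _ u v
  have t2 : (bs'[n]'hn')[0]'(by rw [hbk']; simp [blockOf]) = some (as'[n]'h2) := by
    rw [List.getElem_of_eq hbk']
    exact blockOf_zero _ u' v'
  have e : bs[n]'hn = bs'[n]'hn' := List.getElem_of_eq hbs hn
  have e2 : (bs[n]'hn)[0]'(by rw [hbk]; simp [blockOf]) = (bs'[n]'hn')[0]'(by rw [hbk']; simp [blockOf]) :=
    List.getElem_of_eq e _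
  rw [t1, t2] at e2
  exact Option.some_inj.mp e2

end Det
section Main
variable [TopologicalSpace (Option Bool)] [DiscreteTopology (Option Bool)]

theorem subOmegaImage_closed_eq {F : Set (ℕ → Bool)} (hF : IsClosed F) :
    subOmegaImage gsub F = ⋂ n, Uapprox F n := by
  apply Set.Subset.antisymm
  · intro y hy
    obtain ⟨x, hx, B, hB, hpre⟩ := by
      simpa only [subOmegaImage, mem_iUnion, subOmega, mem_setOf_eq] using hy
    refine mem_iInter.mpr fun n => ⟨(List.range n).map B, (List.range n).map x, by simp, ⟨by simp, ?_, hpre n⟩, ⟨x, hx, fun i hi => by simp⟩⟩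
    intro i hi hi'
    simp only [List.getElem_map, List.getElem_range]
    exact hB i
  · intro y hy
    simp only [mem_iInter] at hy
    -- the sets of choice-bit sequences compatible with length-n parses
    set C : ℕ → Set (ℕ → Bool) := fun n =>
      {c | ∃ bs as, as.length = n ∧ ValidParse y bs as ∧ as ∈ pTree F ∧
        ∀ i (hi : i < bs.length), c i = bitOf bs[i]} with hC
    have hne : ∀ n, (C n).Nonempty := by
      intro n
      obtain ⟨bs, as, h1, h2, h3⟩ := hy n
      exact ⟨fun i => if hi : i < bs.length then bitOf bs[i] else false,
        bs, as, h1, h2, h3, fun i hi => dif_pos hi⟩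
    have hmono : ∀ n, C (n+1) ⊆ C n := by
      rintro n c ⟨bs, as, h1, h2, h3, h4⟩
      refine ⟨bs.take n, as.take n, by simp [h1], validParse_take h2 n, pTree_take h3 n, ?_⟩
      intro i hi
      have hi2 : i < bs.length := by simp at hi; omega
      rw [List.getElem_take]
      exact h4 i hi2
    have hclosed : ∀ n, IsClosed (C n) := by
      intro n
      apply isClosed_of_agree_invariant (n := n)
      rintro c c' hag ⟨bs, as, h1, h2, h3, h4⟩
      refine ⟨bs, as, h1, h2, h3, fun i hi => ?_⟩
      rw [← hag i (by rw [← h1, ← h2.1]; exact hi)]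
      exact h4 i hi
    obtain ⟨c, hc⟩ := IsCompact.nonempty_iInter_of_sequence_nonempty_isCompact_isClosed
      C hmono hne ((hclosed 0).isCompact) hclosed
    simp only [mem_iInter, hC, mem_setOf_eq] at hc
    choose bs as h1 h2 h3 h4 using hc
    have hlens : ∀ n, (bs n).length = n := fun n => ((h2 n).1).trans (h1 n)
    have halens : ∀ n, (as n).length = n := h1
    -- consistency along n
    have key : ∀ m n, m ≤ n → bs m = (bs n).take m ∧ as m = (as n).take m := by
      intro m n hmn
      apply parse_det (h2 m) (validParse_take (h2 n) m)
      · simp [hlens]; omega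
      · intro i hi hi'
        have hin : i < (bs n).length := by rw [hlens]; rw [hlens] at hi; omega
        rw [List.getElem_take, ← h4 m i hi, ← h4 n i hin]
    have hBlt : ∀ i, i < (bs (i+1)).length := by intro i; rw [hlens]; omega
    have hAlt : ∀ i, i < (as (i+1)).length := by intro i; rw [halens]; omega
    set B : ℕ → List (Option Bool) := fun i => (bs (i+1))[i]'(hBlt i) with hBdef
    set xx : ℕ → Bool := fun i => (as (i+1))[i]'(hAlt i) with hxxdef
    have hBent : ∀ n i (hi : i < n) (hi2 : i < (bs n).length), (bs n)[i] = B i := by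
      intro n i hi hi2
      have e := (key (i+1) n hi).1
      have := List.getElem_of_eq e (hBlt i)
      rw [List.getElem_take] at this
      exact this.symm
    have hAent : ∀ n i (hi : i < n) (hi2 : i < (as n).length), (as n)[i] = xx i := by
      intro n i hi hi2
      have e := (key (i+1) n hi).2
      have := List.getElem_of_eq e (hAlt i)
      rw [List.getElem_take] at this
      exact this.symm
    have hxF : xx ∈ F := by
      apply mem_closed_of_agree hF
      intro n
      obtain ⟨z, hz, hag⟩ := h3 n
      refine ⟨z, hz, fun i hi => ?_⟩
      have hi2 : i < (as n).length := by rw [halens]; omega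
      rw [← hag i hi2, hAent n i hi hi2]
    have hmemB : ∀ i, B i ∈ gsub (xx i) := by
      intro i
      have := (h2 (i+1)).2.1 i (hBlt i) (hAlt i)
      rw [hBent (i+1) i (by omega) (hBlt i), hAent (i+1) i (by omega) (hAlt i)] at this
      exact this
    have hpreB : ∀ n, PrefixOf ((List.range n).map B).flatten y := by
      intro n
      have : (List.range n).map B = bs n := by
        apply List.ext_get (by simp [hlens])
        intro i ha hb
        simp only [List.get_eq_getElem, List.getElem_map, List.getElem_range]
        exact (hBent n i (by simpa using ha) hb).symm
      rw [this]
      exact (h2 n).2.2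
    exact mem_iUnion₂.mpr ⟨xx, hxF, ⟨B, hmemB, hpreB⟩⟩

end Main
section Commute
variable {X Y : Type*}

theorem mem_subWord_flatten (f : X → Set (List Y)) :
    ∀ (w : List X) (b : ℕ → List Y), (∀ k (hk : k < w.length), b k ∈ f w[k]) →
      ((List.range w.length).map b).flatten ∈ subWord f w := by
  intro w
  induction w with
  | nil => intro b _; simp [subWord]
  | cons a w ih =>
    intro b hb
    refine ⟨b 0, ((List.range w.length).map (fun k => b (k+1))).flatten,
      hb 0 (by simp), ih (fun k => b (k+1)) (fun k hk => hb (k+1) (by simpa)), ?_⟩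
    rw [List.length_cons, List.range_succ_eq_map]
    simp only [List.map_cons, List.flatten_cons, List.map_map]
    rfl

theorem subWord_elim (f : X → Set (List Y)) :
    ∀ (w : List X) (l : List Y), l ∈ subWord f w →
      ∃ bl : List (List Y), bl.length = w.length ∧
        (∀ k (h : k < bl.length) (h' : k < w.length), bl[k] ∈ f w[k]) ∧ l = bl.flatten := by
  intro w
  induction w with
  | nil =>
    intro l hl
    refine ⟨[], rfl, by simp, ?_⟩
    simpa [subWord] using hl
  | cons a w ih =>
    rintro l ⟨u, v, hu, hv, rfl⟩
    obtain ⟨bl, h1, h2, rfl⟩ := ih v hv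
    refine ⟨u :: bl, by simpa, ?_, by simp⟩
    intro k hk hk'
    match k with
    | 0 => simpa using hu
    | k + 1 =>
      simp only [List.getElem_cons_succ]
      exact h2 k (by simpa using hk) (by simpa using hk')

theorem flatten_range_length_succ (u : ℕ → List X) (n : ℕ) :
    (((List.range (n+1)).map u).flatten).length
      = (((List.range n).map u).flatten).length + (u n).length := by
  rw [flatten_range_succ]; simp

theorem le_flatten_range_length {u : ℕ → List X} (hu : ∀ j, u j ≠ []) (n : ℕ) :
    n ≤ (((List.range n).map u).flatten).length := by
  induction n with
  | zero => simp
  | succ n ih =>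
    rw [flatten_range_length_succ]
    have := List.length_pos_iff.mpr (hu n)
    omega

theorem flatten_range_length_congr {u : ℕ → List X} {v : ℕ → List Y}
    (h : ∀ j, (u j).length = (v j).length) (n : ℕ) :
    (((List.range n).map u).flatten).length = (((List.range n).map v).flatten).length := by
  induction n with
  | zero => simp
  | succ n ih => rw [flatten_range_length_succ, flatten_range_length_succ, ih, h]

theorem getD_flatten_stable (u : ℕ → List X) (d : X) {m m' i : ℕ} (hmm : m ≤ m')
    (hi : i < (((List.range m).map u).flatten).length) :
    (((List.range m').map u).flatten).getD i d = (((List.range m).map u).flatten).getD i d := by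
  rw [show m' = m + (m' - m) by omega, flatten_range_add]
  rw [List.getD_eq_getElem _ _ (by simp only [List.length_append]; omega),
    List.getD_eq_getElem _ _ hi, List.getElem_append_left hi]

theorem flatten_map_flatten (bl : ℕ → List (List Y)) (n : ℕ) :
    ((List.range n).map (fun j => (bl j).flatten)).flatten
      = ((((List.range n).map bl).flatten)).flatten := by
  induction n with
  | zero => simp
  | succ n ih =>
    rw [flatten_range_succ, flatten_range_succ, List.flatten_append, ih]

theorem getD_repr {u : ℕ → List X} (hu : ∀ j, u j ≠ []) (d : X) {m n : ℕ}
    (hn : n < (((List.range m).map u).flatten).length) :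
    (((List.range (n+1)).map u).flatten).getD n d
      = (((List.range m).map u).flatten).getD n d := by
  have h1 : n < (((List.range (n+1)).map u).flatten).length :=
    lt_of_lt_of_le (Nat.lt_succ_self n) (le_flatten_range_length hu (n+1))
  rcases le_total m (n+1) with h | h
  · exact getD_flatten_stable u d h hn
  · exact (getD_flatten_stable u d h h1).symm

theorem flatten_prefix_letter {s : ℕ → List X} {x : ℕ → X}
    (hpre : ∀ n, PrefixOf (((List.range n).map s).flatten) x) {j k : ℕ}
    (hk : k < (s j).length) :
    (s j)[k] = x ((((List.range j).map s).flatten).length + k) := by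
  have e : PrefixOf ((((List.range j).map s).flatten) ++ s j) x := by
    rw [← flatten_range_succ]; exact hpre (j+1)
  have hlt : (((List.range j).map s).flatten).length + k
      < ((((List.range j).map s).flatten) ++ s j).length := by simp; omega
  have h2 : ((((List.range j).map s).flatten) ++ s j)[(((List.range j).map s).flatten).length + k]'hlt
      = x ((((List.range j).map s).flatten).length + k) := e _ hlt
  rw [List.getElem_append_right (Nat.le_add_right _ _)] at h2
  simpa using h2
end Commute
section Commute2

theorem getD_flatten_mem {s : ℕ → List Bool} {bl : ℕ → List (List (Option Bool))}
    (hlen : ∀ j, (bl j).length = (s j).length)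
    (hmem : ∀ j k (hk : k < (bl j).length) (hk' : k < (s j).length),
      (bl j)[k] ∈ gsub (s j)[k]) :
    ∀ m n, n < (((List.range m).map s).flatten).length →
      ((((List.range m).map bl).flatten).getD n []) ∈
        gsub ((((List.range m).map s).flatten).getD n false) := by
  intro m
  induction m with
  | zero => simp
  | succ m ih =>
    intro n hn
    have hcng : (((List.range m).map bl).flatten).length
        = (((List.range m).map s).flatten).length := flatten_range_length_congr hlen m
    have hcng' : (((List.range (m+1)).map bl).flatten).length
        = (((List.range (m+1)).map s).flatten).length := flatten_range_length_congr hlen (m+1)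
    by_cases hcase : n < (((List.range m).map s).flatten).length
    · rw [getD_flatten_stable s false (Nat.le_succ m) hcase,
        getD_flatten_stable bl [] (Nat.le_succ m) (by omega)]
      exact ih n hcase
    · have hsl := flatten_range_length_succ s m
      have hk : n - (((List.range m).map s).flatten).length < (s m).length := by omega
      have hk' : n - (((List.range m).map bl).flatten).length < (bl m).length := by
        rw [hcng, hlen]; exact hk
      rw [List.getD_eq_getElem _ _ hn, List.getD_eq_getElem _ _ (by omega),
        List.getElem_of_eq (flatten_range_succ s m) hn,
        List.getElem_of_eq (flatten_range_succ bl m) (by omega),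
        List.getElem_append_right (by omega), List.getElem_append_right (by omega)]
      have hidx : n - (((List.range m).map bl).flatten).length
          = n - (((List.range m).map s).flatten).length := by omega
      simp only [hidx]
      exact hmem m _ (by omega) hk

theorem subOmegaImage_gsub_eq (L : Set (ℕ → Bool)) (hL : ∀ x ∈ L, x ∈ omegaPow Set.univ → True) :
    True := trivial

theorem commutation (V : Set (List Bool)) :
    subOmegaImage gsub (omegaPow V) = omegaPow (subLang gsub V) := by
  ext y
  constructor
  · intro hy
    obtain ⟨x, hx, B, hBmem, hBpre⟩ : ∃ x ∈ omegaPow V, ∃ B : ℕ → List (Option Bool),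
        (∀ i, B i ∈ gsub (x i)) ∧ ∀ n, PrefixOf (((List.range n).map B).flatten) y := by
      simpa only [subOmegaImage, mem_iUnion, subOmega, mem_setOf_eq, exists_prop] using hy
    obtain ⟨s, hs, hspre⟩ := hx
    set w : ℕ → List (Option Bool) := fun j =>
      ((List.range (s j).length).map
        (fun k => B ((((List.range j).map s).flatten).length + k))).flatten with hw
    have claim1 : ∀ j, w j ∈ subWord gsub (s j) := by
      intro j
      apply mem_subWord_flatten
      intro k hk
      have := hBmem ((((List.range j).map s).flatten).length + k)
      rwa [← flatten_prefix_letter hspre hk] at this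
    have claim2 : ∀ n, ((List.range n).map w).flatten
        = ((List.range ((((List.range n).map s).flatten).length)).map B).flatten := by
      intro n
      induction n with
      | zero => simp
      | succ n ih =>
        rw [flatten_range_succ, ih, flatten_range_length_succ, flatten_range_add]
    have claim3 : ∀ j, w j ≠ [] := by
      intro j
      obtain ⟨m, hm⟩ : ∃ m, (s j).length = m + 1 :=
        ⟨(s j).length - 1, by have := List.length_pos_iff.mpr (hs j).2; omega⟩
      rw [hw]
      simp only [hm, List.range_succ_eq_map, List.map_cons, List.flatten_cons, Nat.add_zero]
      intro hcon
      exact gsub_ne_nil (hBmem _) (List.append_eq_nil_iff.mp hcon).1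
    refine ⟨w, fun j => ⟨mem_iUnion₂.mpr ⟨s j, (hs j).1, claim1 j⟩, claim3 j⟩, ?_⟩
    intro n
    rw [claim2 n]
    exact hBpre _
  · intro hy
    obtain ⟨w, hw, hwpre⟩ := hy
    have hsub : ∀ j, ∃ t ∈ V, w j ∈ subWord gsub t := by
      intro j
      have := (hw j).1
      simpa only [subLang, mem_iUnion, exists_prop] using this
    choose s hsV hsw using hsub
    have hbl : ∀ j, ∃ bl : List (List (Option Bool)), bl.length = (s j).length ∧
        (∀ k (h : k < bl.length) (h' : k < (s j).length), bl[k] ∈ gsub (s j)[k]) ∧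
        w j = bl.flatten := fun j => subWord_elim gsub (s j) (w j) (hsw j)
    choose bl hbl1 hbl2 hbl3 using hbl
    have hsne : ∀ j, s j ≠ [] := by
      intro j hj
      apply (hw j).2
      have := hsw j
      rw [hj] at this
      simpa [subWord] using this
    have hblne : ∀ j, bl j ≠ [] := by
      intro j hj
      apply hsne j
      have := hbl1 j
      rw [hj] at this
      simpa using this.symm
    have hxpre : ∀ n, PrefixOf (((List.range n).map s).flatten)
        (fun i => (((List.range (i+1)).map s).flatten).getD i false) := by
      intro n i hi
      show (((List.range n).map s).flatten)[i]
          = (((List.range (i+1)).map s).flatten).getD i false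
      rw [getD_repr hsne false hi, List.getD_eq_getElem _ _ hi]
    have hxV : (fun i => (((List.range (i+1)).map s).flatten).getD i false) ∈ omegaPow V :=
      ⟨s, fun j => ⟨hsV j, hsne j⟩, hxpre⟩
    have hBmem : ∀ n, (((List.range (n+1)).map bl).flatten).getD n []
        ∈ gsub ((((List.range (n+1)).map s).flatten).getD n false) := by
      intro n
      exact getD_flatten_mem hbl1 hbl2 (n+1) n
        (lt_of_lt_of_le (Nat.lt_succ_self n) (le_flatten_range_length hsne (n+1)))
    have eqBG : ∀ m, (List.range ((((List.range m).map s).flatten).length)).map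
        (fun n => (((List.range (n+1)).map bl).flatten).getD n [])
        = ((List.range m).map bl).flatten := by
      intro m
      have hcng : (((List.range m).map bl).flatten).length
          = (((List.range m).map s).flatten).length := flatten_range_length_congr hbl1 m
      apply List.ext_get (by simp [hcng])
      intro n h1 h2
      have hn : n < (((List.range m).map s).flatten).length := by simpa using h1
      simp only [List.get_eq_getElem, List.getElem_map, List.getElem_range]
      rw [getD_repr hblne []
          (show n < (((List.range m).map bl).flatten).length by omega),
        List.getD_eq_getElem _ _ (by omega)]
    have hBpre : ∀ n, PrefixOf (((List.range n).map
        (fun i => (((List.range (i+1)).map bl).flatten).getD i [])).flatten) y := by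
      intro n
      apply prefixOf_flatten_range_mono (le_flatten_range_length hsne n)
      rw [eqBG n, ← flatten_map_flatten]
      have heq : (List.range n).map (fun j => (bl j).flatten) = (List.range n).map w :=
        List.map_congr_left (fun j _ => (hbl3 j).symm)
      rw [heq]
      exact hwpre n
    exact mem_iUnion₂.mpr ⟨_, hxV, ⟨_, hBmem, hBpre⟩⟩

end Commute2

section Assemble

theorem sigmaPi_measurable {α : Type*} [TopologicalSpace α] :
    ∀ n, ∀ s : Set α,
      ((sigmaPiAux α n).1 s → @MeasurableSet α (borel α) s) ∧
      ((sigmaPiAux α n).2 s → @MeasurableSet α (borel α) s) := by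
  intro n
  induction n with
  | zero =>
    intro s
    constructor
    · intro h
      exact MeasurableSpace.measurableSet_generateFrom h
    · intro h
      simpa using (show @MeasurableSet α (borel α) sᶜᶜ from (MeasurableSpace.measurableSet_generateFrom h.isOpen_compl).compl)
  | succ n ih =>
    intro s
    constructor
    · rintro ⟨f, hf, rfl⟩
      exact MeasurableSet.iUnion (fun i => (ih (f i)).2 (hf i))
    · rintro ⟨f, hf, rfl⟩
      exact MeasurableSet.iInter (fun i => (ih (f i)).1 (hf i))

theorem subOmegaImage_iUnion {X Y : Type*} (f : X → Set (List Y)) (L : ℕ → Set (ℕ → X)) :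
    subOmegaImage f (⋃ n, L n) = ⋃ n, subOmegaImage f (L n) := by
  ext y
  simp only [subOmegaImage, mem_iUnion]
  tauto

end Assemble


/-- if `V^ω` is Σ⁰₂ then `(g(V))^ω = g(V^ω)` is a Σ⁰₃, hence Borel,
subset of `({0,1,d})^ω`. -/
theorem gsub_omegaPow_borel
    [TopologicalSpace (Option Bool)] [DiscreteTopology (Option Bool)]
    (V : Set (List Bool)) (hV : SigmaClass 2 (omegaPow V)) :
    subOmegaImage gsub (omegaPow V) = omegaPow (subLang gsub V) ∧
    SigmaClass 3 (omegaPow (subLang gsub V)) ∧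
    @MeasurableSet (ℕ → Option Bool) (borel (ℕ → Option Bool)) (omegaPow (subLang gsub V)) := by
  have hcomm := commutation V
  simp only [SigmaClass, sigmaPiAux] at hV
  obtain ⟨f, hfcl, hfeq⟩ := hV
  have himg : subOmegaImage gsub (omegaPow V) = ⋃ n, subOmegaImage gsub (f n) := by
    rw [hfeq, subOmegaImage_iUnion]
  have hS3 : SigmaClass 3 (omegaPow (subLang gsub V)) := by
    simp only [SigmaClass, sigmaPiAux]
    refine ⟨fun n => subOmegaImage gsub (f n), ?_, ?_⟩
    · intro n
      exact ⟨Uapprox (f n), fun m => isOpen_Uapprox _ _, subOmegaImage_closed_eq (hfcl n)⟩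
    · rw [← hcomm, himg]
  refine ⟨hcomm, hS3, ?_⟩
  exact (sigmaPi_measurable 2 _).1 hS3
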